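/- For all $k,\ell\in\{1,\dots,m\}$ one has $\Lambda_\mathbf{i}\big(\varphi'_\mathbf{i}(\partial_\mathbf{i}\varepsilon_k),\ \varphi'_\mathbf{i}(\partial_\mathbf{i}\varepsilon_\ell)\big)=\operatorname{sgn}(\ell-k)\,(w_k\alpha_{i_k},\ w_\ell\alpha_{i_\ell})$. -/

import Mathlib

open Finset

/-- The weight lattice `𝒫`: the free abelian group with basis `{αᵢ, ωᵢ : i ∈ I}`,
represented by pairs of coefficient vectors (first component: coefficients of the `αᵢ`,
second component: coefficients of the `ωᵢ`). -/
abbrev PLat (n : ℕ) := (Fin n → ℤ) × (Fin n → ℤ)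

/-- The coroot lattice `𝒬^∨`: the free abelian group with basis `{αᵢ^∨ : i ∈ I}`,
represented by coefficient vectors. -/
abbrev QvLat (n : ℕ) := Fin n → ℤ

variable {n : ℕ}

/-- The basis element `α_j^∨` of `𝒬^∨`. -/
def coroot (j : Fin n) : QvLat n := fun k => if k = j then 1 else 0

/-- The basis element `α_j` of `𝒫`. -/
def alP (j : Fin n) : PLat n := (fun k => if k = j then 1 else 0, 0)

/-- The basis element `ω_j` of `𝒫`. -/
def omP (j : Fin n) : PLat n := (0, fun k => if k = j then 1 else 0)

/-- The biadditive pairing `𝒬^∨ × 𝒫 → ℤ` with `(αᵢ^∨, α_j) = a_{ij}` and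
`(αᵢ^∨, ω_j) = δ_{ij}`. -/
def pairQP (A : Fin n → Fin n → ℤ) (x : QvLat n) (lam : PLat n) : ℤ :=
  (∑ a, ∑ b, x a * A a b * lam.1 b) + ∑ a, x a * lam.2 a

/-- The simple reflection `sᵢ` on `𝒫`: `sᵢ α_j = α_j - a_{ij} αᵢ`,
`sᵢ ω_j = ω_j - δ_{ij} αᵢ`. -/
def sP (A : Fin n → Fin n → ℤ) (a : Fin n) (lam : PLat n) : PLat n :=
  (fun j => if j = a then lam.1 a - ((∑ k, A a k * lam.1 k) + lam.2 a) else lam.1 j,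
   lam.2)

/-- The simple reflection `sᵢ^∨` on `𝒬^∨`: `sᵢ^∨ α_j^∨ = α_j^∨ - a_{ji} αᵢ^∨`. -/
def sQ (A : Fin n → Fin n → ℤ) (a : Fin n) (x : QvLat n) : QvLat n :=
  fun j => if j = a then x a - ∑ k, A k a * x k else x j

/-- `w_ℓ = s_{i₁} ∘ ⋯ ∘ s_{i_ℓ}` on `𝒫` (with `w₀ = id`). -/
def wP (A : Fin n → Fin n → ℤ) (ii : ℕ → Fin n) : ℕ → PLat n → PLat n
  | 0 => id
  | (l+1) => wP A ii l ∘ sP A (ii (l+1))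

/-- `w_ℓ^∨ = s_{i₁}^∨ ∘ ⋯ ∘ s_{i_ℓ}^∨` on `𝒬^∨` (with `w₀ = id`). -/
def wQ (A : Fin n → Fin n → ℤ) (ii : ℕ → Fin n) : ℕ → QvLat n → QvLat n
  | 0 => id
  | (l+1) => wQ A ii l ∘ sQ A (ii (l+1))

/-- `k⁺ = min({ℓ : k < ℓ ≤ m, i_ℓ = i_k} ∪ {m+1})`. -/
noncomputable def kplus (ii : ℕ → Fin n) (m k : ℕ) : ℕ :=
  sInf ({l | k < l ∧ l ≤ m ∧ ii l = ii k} ∪ {m+1})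

/-- `k⁻ = max({ℓ : 1 ≤ ℓ < k, i_ℓ = i_k} ∪ {0})`. -/
noncomputable def kminus (ii : ℕ → Fin n) (k : ℕ) : ℕ :=
  sSup ({l | 1 ≤ l ∧ l < k ∧ ii l = ii k} ∪ {0})

/-- The standard basis vector `ε_k` of `ℤ^m` (1-based index), with the convention
`ε_s = 0` for `s ∉ {1,…,m}`. -/
def eps (m k : ℕ) : Fin m → ℤ := fun j => if (j : ℕ) + 1 = k then 1 else 0

/-- `φ_𝐢(ε_k) = -ε_k - ε_{k⁻} - ∑_{ℓ : ℓ < k < ℓ⁺} a_{i_ℓ i_k} ε_ℓ`. -/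
noncomputable def phiE (A : Fin n → Fin n → ℤ) (ii : ℕ → Fin n) (m k : ℕ) :
    Fin m → ℤ :=
  -(eps m k) - eps m (kminus ii k)
    - ∑ l : Fin m, (if (l:ℕ)+1 < k ∧ k < kplus ii m ((l:ℕ)+1)
        then A (ii ((l:ℕ)+1)) (ii k) else 0) • eps m ((l:ℕ)+1)

/-- The endomorphism `φ_𝐢` of `ℤ^m`, extended additively from its values on the basis. -/
noncomputable def phiMap (A : Fin n → Fin n → ℤ) (ii : ℕ → Fin n) (m : ℕ)
    (v : Fin m → ℤ) : Fin m → ℤ :=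
  ∑ k : Fin m, v k • phiE A ii m ((k:ℕ)+1)

/-- `φ'_𝐢(ε_ℓ) = -∑_{k=1}^{ℓ} (w_k^∨ α_{i_k}^∨, w_ℓ ω_{i_ℓ}) ε_k`. -/
def phiE' (A : Fin n → Fin n → ℤ) (ii : ℕ → Fin n) (m l : ℕ) : Fin m → ℤ :=
  -∑ k : Fin m, (if (k:ℕ)+1 ≤ l then
      pairQP A (wQ A ii ((k:ℕ)+1) (coroot (ii ((k:ℕ)+1)))) (wP A ii l (omP (ii l)))
    else 0) • eps m ((k:ℕ)+1)

/-- The endomorphism `φ'_𝐢` of `ℤ^m`, extended additively from its values on the basis. -/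
def phiMap' (A : Fin n → Fin n → ℤ) (ii : ℕ → Fin n) (m : ℕ)
    (v : Fin m → ℤ) : Fin m → ℤ :=
  ∑ l : Fin m, v l • phiE' A ii m ((l:ℕ)+1)

/-- `∂_𝐢 ε_k = ε_k - ε_{k⁻}`. -/
noncomputable def derE (ii : ℕ → Fin n) (m k : ℕ) : Fin m → ℤ :=
  eps m k - eps m (kminus ii k)

/-- The endomorphism `∂_𝐢` of `ℤ^m`. -/
noncomputable def derMap (ii : ℕ → Fin n) (m : ℕ) (v : Fin m → ℤ) : Fin m → ℤ :=
  ∑ k : Fin m, v k • derE ii m ((k:ℕ)+1)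

/-- `∫_𝐢 ε_k = ε_k + ε_{k⁻} + ε_{(k⁻)⁻} + ⋯` (summing along the chain `k > k⁻ > ⋯ > 0`). -/
noncomputable def intE (ii : ℕ → Fin n) (m : ℕ) (k : ℕ) : Fin m → ℤ :=
  if h : kminus ii k < k then eps m k + intE ii m (kminus ii k) else eps m k
termination_by k
decreasing_by exact h

/-- The endomorphism `∫_𝐢` of `ℤ^m`. -/
noncomputable def intMap (ii : ℕ → Fin n) (m : ℕ) (v : Fin m → ℤ) : Fin m → ℤ :=
  ∑ k : Fin m, v k • intE ii m ((k:ℕ)+1)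

/-- The skew-symmetric biadditive form `Λ_𝐢` on `ℤ^m` with
`Λ_𝐢(ε_k, ε_ℓ) = sgn(k-ℓ) c_{i_k i_ℓ}` where `c_{ij} = dᵢ a_{ij}`. -/
def LamF (A : Fin n → Fin n → ℤ) (d : Fin n → ℤ) (ii : ℕ → Fin n) (m : ℕ)
    (a b : Fin m → ℤ) : ℤ :=
  ∑ k : Fin m, ∑ l : Fin m, a k * b l *
    ((((k:ℕ):ℤ) - ((l:ℕ):ℤ)).sign *
      (d (ii ((k:ℕ)+1)) * A (ii ((k:ℕ)+1)) (ii ((l:ℕ)+1))))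

/-- The biadditive form `Φ_𝐢` on `ℤ^m` with `Φ_𝐢(ε_k,ε_ℓ) = -d_{i_k}` if `k = ℓ`,
`= -c_{i_ℓ i_k}` if `ℓ < k`, and `= 0` if `ℓ > k`. -/
def PhiF (A : Fin n → Fin n → ℤ) (d : Fin n → ℤ) (ii : ℕ → Fin n) (m : ℕ)
    (a b : Fin m → ℤ) : ℤ :=
  ∑ k : Fin m, ∑ l : Fin m, a k * b l *
    (if (k:ℕ) = (l:ℕ) then -(d (ii ((k:ℕ)+1)))
     else if (l:ℕ) < (k:ℕ) then
       -(d (ii ((l:ℕ)+1)) * A (ii ((l:ℕ)+1)) (ii ((k:ℕ)+1)))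
     else 0)

/-- The entry `b_{pk}` of the exchange matrix `B̃_𝐢`. -/
noncomputable def bcoef (A : Fin n → Fin n → ℤ) (ii : ℕ → Fin n) (m p k : ℕ) : ℤ :=
  if p = kminus ii k then -1
  else if p < k ∧ k < kplus ii m p ∧ kplus ii m p < kplus ii m k then
    -(A (ii p) (ii k))
  else if k < p ∧ p < kplus ii m k ∧ kplus ii m k < kplus ii m p then
    A (ii p) (ii k)
  else if p = kplus ii m k then 1
  else 0

/-- The column `𝐛^k = ∑_p b_{pk} ε_p ∈ ℤ^m` of the exchange matrix. -/
noncomputable def bvec (A : Fin n → Fin n → ℤ) (ii : ℕ → Fin n) (m k : ℕ) :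
    Fin m → ℤ :=
  fun p => bcoef A ii m ((p:ℕ)+1) k

/-- `ρ_𝐢⁺(ε_k) = ε_k + ∑_{ℓ<k, ℓ⁺=m+1} a_{i_ℓ i_k} ε_ℓ`. -/
noncomputable def rhoPE (A : Fin n → Fin n → ℤ) (ii : ℕ → Fin n) (m k : ℕ) :
    Fin m → ℤ :=
  eps m k + ∑ l : Fin m, (if (l:ℕ)+1 < k ∧ kplus ii m ((l:ℕ)+1) = m+1
      then A (ii ((l:ℕ)+1)) (ii k) else 0) • eps m ((l:ℕ)+1)

/-- `ρ_𝐢⁻(ε_k) = ε_k - ∑_{ℓ≤k, ℓ⁺=m+1} a_{i_ℓ i_k} ε_ℓ`. -/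
noncomputable def rhoME (A : Fin n → Fin n → ℤ) (ii : ℕ → Fin n) (m k : ℕ) :
    Fin m → ℤ :=
  eps m k - ∑ l : Fin m, (if (l:ℕ)+1 ≤ k ∧ kplus ii m ((l:ℕ)+1) = m+1
      then A (ii ((l:ℕ)+1)) (ii k) else 0) • eps m ((l:ℕ)+1)

/-- The endomorphism `ρ_𝐢⁺` of `ℤ^m`. -/
noncomputable def rhoPMap (A : Fin n → Fin n → ℤ) (ii : ℕ → Fin n) (m : ℕ)
    (v : Fin m → ℤ) : Fin m → ℤ :=
  ∑ k : Fin m, v k • rhoPE A ii m ((k:ℕ)+1)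

/-- The endomorphism `ρ_𝐢⁻` of `ℤ^m`. -/
noncomputable def rhoMMap (A : Fin n → Fin n → ℤ) (ii : ℕ → Fin n) (m : ℕ)
    (v : Fin m → ℤ) : Fin m → ℤ :=
  ∑ k : Fin m, v k • rhoME A ii m ((k:ℕ)+1)

/-- `𝐚_λ = -∑_{k=1}^m (w_k^∨ α_{i_k}^∨, w_m λ) ε_k ∈ ℤ^m`. -/
def avec (A : Fin n → Fin n → ℤ) (ii : ℕ → Fin n) (m : ℕ) (lam : PLat n) :
    Fin m → ℤ :=
  fun k => -(pairQP A (wQ A ii ((k:ℕ)+1) (coroot (ii ((k:ℕ)+1)))) (wP A ii m lam))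

/-- `|𝐚| = ∑_{k=1}^m a_k α_{i_k} ∈ 𝒬 ⊆ 𝒫`. -/
def degP (ii : ℕ → Fin n) (m : ℕ) (a : Fin m → ℤ) : PLat n :=
  (fun j => ∑ k : Fin m, if ii ((k:ℕ)+1) = j then a k else 0, 0)

/-- The pairing `(μ, λ) = ∑ mᵢ dᵢ (αᵢ^∨, λ)` for `μ = ∑ mᵢ αᵢ ∈ 𝒬` and `λ ∈ 𝒫`
(induced by identifying `αᵢ` with `dᵢ αᵢ^∨`). -/
def pairAl (A : Fin n → Fin n → ℤ) (d : Fin n → ℤ) (mu lam : PLat n) : ℤ :=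
  ∑ j, mu.1 j * (d j * pairQP A (coroot j) lam)


/-! ### Auxiliary development for Statement 9 -/

section Aux9

variable {n : ℕ}

/-- Tail word: `tl9 A ii l lam p = s_{i_{p+1}} ⋯ s_{i_l} lam` (identity for `p ≥ l`). -/
def tl9 (A : Fin n → Fin n → ℤ) (ii : ℕ → Fin n) (l : ℕ) (lam : PLat n) (p : ℕ) :
    PLat n :=
  if h : p < l then sP A (ii (p+1)) (tl9 A ii l lam (p+1)) else lam
termination_by l - p
decreasing_by omega

lemma tl9_of_lt {A : Fin n → Fin n → ℤ} {ii : ℕ → Fin n} {l p : ℕ} (h : p < l)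
    (lam : PLat n) : tl9 A ii l lam p = sP A (ii (p+1)) (tl9 A ii l lam (p+1)) := by
  rw [tl9]; simp [h]

lemma tl9_of_ge {A : Fin n → Fin n → ℤ} {ii : ℕ → Fin n} {l p : ℕ} (h : l ≤ p)
    (lam : PLat n) : tl9 A ii l lam p = lam := by
  rw [tl9]; simp [Nat.not_lt.2 h]

/-- `g9 A ii k p = (α_{i_p}^∨, s_{i_{p+1}} ⋯ s_{i_k} α_{i_k})`. -/
def g9 (A : Fin n → Fin n → ℤ) (ii : ℕ → Fin n) (k p : ℕ) : ℤ :=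
  pairQP A (coroot (ii p)) (tl9 A ii k (alP (ii k)) p)

lemma sP_snd (A : Fin n → Fin n → ℤ) (a : Fin n) (lam : PLat n) :
    (sP A a lam).2 = lam.2 := rfl

lemma sP_fst (A : Fin n → Fin n → ℤ) (a : Fin n) (lam : PLat n) (j : Fin n) :
    (sP A a lam).1 j
      = lam.1 j - (if j = a then ((∑ k, A a k * lam.1 k) + lam.2 a) else 0) := by
  by_cases h : j = a <;> simp [sP, h]

lemma pairQP_coroot (A : Fin n → Fin n → ℤ) (j : Fin n) (lam : PLat n) :
    pairQP A (coroot j) lam = (∑ b, A j b * lam.1 b) + lam.2 j := by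
  simp [pairQP, coroot, ite_mul, zero_mul, one_mul]

lemma pairQP_sub_left (A : Fin n → Fin n → ℤ) (x y : QvLat n) (lam : PLat n) :
    pairQP A (fun j => x j - y j) lam = pairQP A x lam - pairQP A y lam := by
  simp [pairQP, sub_mul, Finset.sum_sub_distrib]; ring

lemma pairQP_delta_left (A : Fin n → Fin n → ℤ) (a : Fin n) (t : ℤ) (lam : PLat n) :
    pairQP A (fun j => if j = a then t else 0) lam
      = t * ((∑ b, A a b * lam.1 b) + lam.2 a) := by
  simp only [pairQP, ite_mul, zero_mul, Finset.sum_ite_irrel, Finset.sum_const_zero,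
    Finset.sum_ite_eq', Finset.mem_univ, if_true]
  rw [mul_add, Finset.mul_sum]
  congr 1
  apply Finset.sum_congr rfl; intro b _; ring

lemma pairQP_adj (A : Fin n → Fin n → ℤ) (a : Fin n) (x : QvLat n) (lam : PLat n) :
    pairQP A (sQ A a x) lam = pairQP A x (sP A a lam) := by
  have hx : sQ A a x = fun j => x j - (if j = a then (∑ k, A k a * x k) else 0) := by
    funext j; by_cases h : j = a <;> simp [sQ, h]
  rw [hx, pairQP_sub_left, pairQP_delta_left]
  have hr : pairQP A x (sP A a lam)
      = pairQP A x lam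
        - (∑ p, x p * A p a) * ((∑ k, A a k * lam.1 k) + lam.2 a) := by
    simp only [pairQP, sP_fst, sP_snd, mul_sub, Finset.sum_sub_distrib, mul_ite,
      mul_zero, Finset.sum_ite_eq', Finset.mem_univ, if_true]
    rw [Finset.sum_mul]
    ring_nf
    simp only [Finset.sum_add_distrib]
    ring_nf
  rw [hr]
  congr 1
  rw [Finset.sum_mul, Finset.sum_mul]
  apply Finset.sum_congr rfl; intro p _; ring

lemma sP_invol (A : Fin n → Fin n → ℤ) (hA : ∀ i, A i i = 2) (a : Fin n)
    (lam : PLat n) : sP A a (sP A a lam) = lam := by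
  have h2 : (sP A a lam).2 = lam.2 := rfl
  ext j
  · rw [sP_fst, sP_fst, h2]
    have : (∑ k, A a k * (sP A a lam).1 k)
        = (∑ k, A a k * lam.1 k) - 2 * ((∑ k, A a k * lam.1 k) + lam.2 a) := by
      simp only [sP_fst]
      simp only [mul_sub, Finset.sum_sub_distrib, mul_ite, mul_zero,
        Finset.sum_ite_eq', Finset.mem_univ, if_true, hA]
    rw [this]
    by_cases h : j = a <;> simp [h] <;> ring
  · rfl


variable {A : Fin n → Fin n → ℤ} {ii : ℕ → Fin n}

lemma pairQP_wQ_wP (A : Fin n → Fin n → ℤ) (hA : ∀ i, A i i = 2) (ii : ℕ → Fin n) :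
    ∀ (p : ℕ) (x : QvLat n) (lam : PLat n),
      pairQP A (wQ A ii p x) (wP A ii p lam) = pairQP A x lam := by
  intro p
  induction p with
  | zero => intro x lam; rfl
  | succ p ih =>
    intro x lam
    have h1 : wQ A ii (p+1) x = wQ A ii p (sQ A (ii (p+1)) x) := rfl
    have h2 : wP A ii (p+1) lam = wP A ii p (sP A (ii (p+1)) lam) := rfl
    rw [h1, h2, ih, pairQP_adj, sP_invol A hA]

lemma wP_tl (hA : ∀ i, A i i = 2) (l : ℕ) (lam : PLat n) :
    ∀ t p, l - p ≤ t → p ≤ l →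
      wP A ii p (tl9 A ii l lam p) = wP A ii l lam := by
  intro t
  induction t with
  | zero =>
    intro p h1 h2
    have : p = l := by omega
    subst this
    rw [tl9_of_ge le_rfl]
  | succ t ih =>
    intro p h1 h2
    rcases Nat.eq_or_lt_of_le h2 with h | h
    · subst h; rw [tl9_of_ge le_rfl]
    · rw [tl9_of_lt h]
      have : wP A ii p (sP A (ii (p+1)) (tl9 A ii l lam (p+1)))
          = wP A ii (p+1) (tl9 A ii l lam (p+1)) := rfl
      rw [this, ih (p+1) (by omega) (by omega)]

lemma pairQP_cancel (hA : ∀ i, A i i = 2) {p l : ℕ} (h : p ≤ l)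
    (x : QvLat n) (lam : PLat n) :
    pairQP A (wQ A ii p x) (wP A ii l lam) = pairQP A x (tl9 A ii l lam p) := by
  rw [← wP_tl hA l lam (l - p) p le_rfl h, pairQP_wQ_wP A hA]

lemma tl9_snd (l : ℕ) (lam : PLat n) : ∀ t p, l - p ≤ t →
    (tl9 A ii l lam p).2 = lam.2 := by
  intro t
  induction t with
  | zero => intro p h; rw [tl9_of_ge (by omega)]
  | succ t ih =>
    intro p h
    by_cases hp : p < l
    · rw [tl9_of_lt hp, sP_snd, ih (p+1) (by omega)]
    · rw [tl9_of_ge (by omega)]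

lemma tl9_snd' {l p : ℕ} (lam : PLat n) : (tl9 A ii l lam p).2 = lam.2 :=
  tl9_snd l lam (l-p) p le_rfl

lemma sP_sub (A : Fin n → Fin n → ℤ) (a : Fin n) (lam mu : PLat n) :
    sP A a (lam - mu) = sP A a lam - sP A a mu := by
  ext j
  · simp only [sP_fst, Prod.fst_sub, Pi.sub_apply, Prod.snd_sub, mul_sub,
      Finset.sum_sub_distrib]
    by_cases h : j = a <;> simp [h] <;> ring
  · rfl

lemma tl9_sub (l : ℕ) (lam mu : PLat n) : ∀ t p, l - p ≤ t →
    tl9 A ii l (lam - mu) p = tl9 A ii l lam p - tl9 A ii l mu p := by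
  intro t
  induction t with
  | zero => intro p h; rw [tl9_of_ge (by omega), tl9_of_ge (by omega), tl9_of_ge (by omega)]
  | succ t ih =>
    intro p h
    by_cases hp : p < l
    · rw [tl9_of_lt hp, tl9_of_lt hp, tl9_of_lt hp, ih (p+1) (by omega), sP_sub]
    · rw [tl9_of_ge (by omega), tl9_of_ge (by omega), tl9_of_ge (by omega)]

lemma sP_omP_ne (A : Fin n → Fin n → ℤ) {a c : Fin n} (h : a ≠ c) :
    sP A a (omP c) = omP c := by
  ext j
  · simp only [sP_fst, omP, Pi.zero_apply, mul_zero, Finset.sum_const_zero, zero_add]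
    have : (if a = c then (1:ℤ) else 0) = 0 := by simp [h]
    by_cases hj : j = a <;> simp [hj, this, h]
  · rfl

lemma sP_omP_self (A : Fin n → Fin n → ℤ) (a : Fin n) :
    sP A a (omP a) = omP a - alP a := by
  ext j
  · simp only [sP_fst, omP, alP, Prod.fst_sub, Pi.sub_apply, Pi.zero_apply, mul_zero,
      Finset.sum_const_zero, zero_add]
    by_cases hj : j = a <;> simp [hj]
  · simp [sP, omP, alP]

lemma sP_alP_self (A : Fin n → Fin n → ℤ) (hA : ∀ i, A i i = 2) (a : Fin n) :
    sP A a (alP a) = (0 : PLat n) - alP a := by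
  ext j
  · simp only [sP_fst, alP, Prod.fst_sub, Pi.sub_apply, Prod.fst_zero, Pi.zero_apply]
    have : (∑ k, A a k * (if k = a then (1:ℤ) else 0)) = 2 := by
      simp [mul_ite, hA]
    rw [this]
    by_cases hj : j = a <;> simp [hj]
  · simp [sP, alP]

lemma tl9_peel (hA : ∀ i, A i i = 2) (l : ℕ) (lam : PLat n) : ∀ t p, l - p ≤ t → p ≤ l →
    tl9 A ii (l+1) lam p = tl9 A ii l (sP A (ii (l+1)) lam) p := by
  intro t
  induction t with
  | zero =>
    intro p h1 h2
    have hp : p = l := by omega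
    subst hp
    rw [tl9_of_lt (by omega), tl9_of_ge le_rfl, tl9_of_ge (by omega)]
  | succ t ih =>
    intro p h1 h2
    rcases Nat.eq_or_lt_of_le h2 with h | h
    · subst h
      rw [tl9_of_lt (by omega), tl9_of_ge le_rfl, tl9_of_ge (by omega)]
    · rw [tl9_of_lt (by omega), tl9_of_lt h, ih (p+1) (by omega) (by omega)]

lemma tl9_om_stable (hA : ∀ i, A i i = 2) (c : Fin n) :
    ∀ t (l l₀ : ℕ), l - l₀ ≤ t → l₀ ≤ l →
      (∀ r, l₀ < r → r ≤ l → ii r ≠ c) →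
      ∀ p, p ≤ l₀ → tl9 A ii l (omP c) p = tl9 A ii l₀ (omP c) p := by
  intro t
  induction t with
  | zero =>
    intro l l₀ h1 h2 _ p _
    have : l = l₀ := by omega
    rw [this]
  | succ t ih =>
    intro l l₀ h1 h2 hr p hp
    rcases Nat.eq_or_lt_of_le h2 with h | h
    · rw [h]
    · obtain ⟨l', rfl⟩ : ∃ l', l = l' + 1 := ⟨l - 1, by omega⟩
      rw [tl9_peel hA l' (omP c) (l' - p) p le_rfl (by omega),
        sP_omP_ne A (hr (l'+1) (by omega) le_rfl)]
      exact ih l' l₀ (by omega) (by omega) (fun r h1 h2 => hr r h1 (by omega)) p hp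



lemma kminus_mem (ii : ℕ → Fin n) (k : ℕ) :
    kminus ii k ∈ ({l | 1 ≤ l ∧ l < k ∧ ii l = ii k} ∪ {0} : Set ℕ) := by
  apply Nat.sSup_mem ⟨0, Or.inr rfl⟩
  exact ⟨k, fun x hx => by
    rcases hx with h | h
    · exact le_of_lt h.2.1
    · simp only [Set.mem_singleton_iff] at h; omega⟩

lemma kminus_lt {k : ℕ} (ii : ℕ → Fin n) (hk : 1 ≤ k) : kminus ii k < k := by
  rcases kminus_mem ii k with h | h
  · exact h.2.1
  · simp only [Set.mem_singleton_iff] at h; omega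

lemma kminus_ii {k : ℕ} (ii : ℕ → Fin n) (h : 1 ≤ kminus ii k) :
    ii (kminus ii k) = ii k := by
  rcases kminus_mem ii k with hm | hm
  · exact hm.2.2
  · simp only [Set.mem_singleton_iff] at hm; omega

lemma kminus_max {k r : ℕ} (ii : ℕ → Fin n) (h1 : kminus ii k < r) (h2 : r < k)
    (h3 : ii r = ii k) : False := by
  have hr : r ∈ ({l | 1 ≤ l ∧ l < k ∧ ii l = ii k} ∪ {0} : Set ℕ) :=
    Or.inl ⟨by omega, h2, h3⟩
  have hbdd : BddAbove ({l | 1 ≤ l ∧ l < k ∧ ii l = ii k} ∪ {0} : Set ℕ) :=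
    ⟨k, fun x hx => by
      rcases hx with h | h
      · exact le_of_lt h.2.1
      · simp only [Set.mem_singleton_iff] at h; omega⟩
  have := le_csSup hbdd hr
  rw [kminus] at h1
  omega

lemma tl9_fst (k : ℕ) : ∀ t p, k - p ≤ t → ∀ j,
    (tl9 A ii k (alP (ii k)) p).1 j
      = (if j = ii k then 1 else 0)
        - ∑ r ∈ Finset.Ioc p k, (if j = ii r then g9 A ii k r else 0) := by
  intro t
  induction t with
  | zero =>
    intro p h j
    rw [tl9_of_ge (by omega), Finset.Ioc_eq_empty (by omega)]
    simp [alP]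
  | succ t ih =>
    intro p h j
    by_cases hp : p < k
    · rw [tl9_of_lt hp, sP_fst]
      rw [← pairQP_coroot A (ii (p+1)) (tl9 A ii k (alP (ii k)) (p+1))]
      rw [show pairQP A (coroot (ii (p+1))) (tl9 A ii k (alP (ii k)) (p+1))
          = g9 A ii k (p+1) from rfl]
      have hins : Finset.Ioc p k = insert (p+1) (Finset.Ioc (p+1) k) := by
        ext r; simp only [Finset.mem_Ioc, Finset.mem_insert]; omega
      rw [ih (p+1) (by omega) j, hins, Finset.sum_insert (by simp)]
      ring
    · rw [tl9_of_ge (by omega), Finset.Ioc_eq_empty (by omega)]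
      simp [alP]

lemma g9_rec (A : Fin n → Fin n → ℤ) (ii : ℕ → Fin n) (k p : ℕ) :
    g9 A ii k p = A (ii p) (ii k)
      - ∑ r ∈ Finset.Ioc p k, g9 A ii k r * A (ii p) (ii r) := by
  rw [g9, pairQP_coroot, tl9_snd']
  rw [show (alP (ii k)).2 (ii p) = 0 from rfl, add_zero]
  have := tl9_fst (A := A) (ii := ii) k (k - p) p le_rfl
  calc ∑ b, A (ii p) b * (tl9 A ii k (alP (ii k)) p).1 b
      = ∑ b, (A (ii p) b * (if b = ii k then 1 else 0)
          - ∑ r ∈ Finset.Ioc p k, (if b = ii r then A (ii p) b * g9 A ii k r else 0)) := by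
        apply Finset.sum_congr rfl; intro b _
        rw [this b, mul_sub, Finset.mul_sum]
        congr 1
        apply Finset.sum_congr rfl; intro r _
        by_cases hb : b = ii r <;> simp [hb]
    _ = A (ii p) (ii k)
          - ∑ r ∈ Finset.Ioc p k, g9 A ii k r * A (ii p) (ii r) := by
        rw [Finset.sum_sub_distrib]
        congr 1
        · simp [mul_ite]
        · rw [Finset.sum_comm]
          apply Finset.sum_congr rfl; intro r _
          simp only [Finset.sum_ite_eq', Finset.mem_univ, if_true]
          ring

lemma sP_zero (A : Fin n → Fin n → ℤ) (a : Fin n) : sP A a (0 : PLat n) = 0 := by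
  ext j
  · simp [sP_fst]
  · rfl

lemma tl9_zero (l : ℕ) : ∀ t p, l - p ≤ t → tl9 A ii l (0 : PLat n) p = 0 := by
  intro t
  induction t with
  | zero => intro p h; rw [tl9_of_ge (by omega)]
  | succ t ih =>
    intro p h
    by_cases hp : p < l
    · rw [tl9_of_lt hp, ih (p+1) (by omega), sP_zero]
    · rw [tl9_of_ge (by omega)]

/-- Telescoping: `s_{p+1}⋯s_k ω_{i_k} = s_{p+1}⋯s_{k-1} ω_{i_k} + s_{p+1}⋯s_k α_{i_k}`. -/
lemma omtel (hA : ∀ i, A i i = 2) (k' : ℕ) {p : ℕ} (hp : p ≤ k') :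
    tl9 A ii (k'+1) (omP (ii (k'+1))) p
      = tl9 A ii k' (omP (ii (k'+1))) p + tl9 A ii (k'+1) (alP (ii (k'+1))) p := by
  set c := ii (k'+1) with hc
  have h1 : tl9 A ii (k'+1) (omP c) p
      = tl9 A ii k' (omP c) p - tl9 A ii k' (alP c) p := by
    rw [tl9_peel hA k' (omP c) (k'-p) p le_rfl hp, sP_omP_self,
      tl9_sub k' _ _ (k'-p) p le_rfl]
  have h2 : tl9 A ii (k'+1) (alP c) p = (0:PLat n) - tl9 A ii k' (alP c) p := by
    rw [tl9_peel hA k' (alP c) (k'-p) p le_rfl hp, sP_alP_self A hA,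
      tl9_sub k' _ _ (k'-p) p le_rfl, tl9_zero k' (k'-p) p le_rfl]
  rw [h1, h2]
  abel


lemma eps_apply {m : ℕ} (k : ℕ) (j : Fin m) :
    eps m k j = if (j:ℕ)+1 = k then 1 else 0 := rfl

lemma phiE'_apply (hA : ∀ i, A i i = 2) (m l : ℕ) (j : Fin m) :
    phiE' A ii m l j
      = -(if (j:ℕ)+1 ≤ l then
          pairQP A (coroot (ii ((j:ℕ)+1))) (tl9 A ii l (omP (ii l)) ((j:ℕ)+1))
        else 0) := by
  rw [phiE']
  rw [Pi.neg_apply, Finset.sum_apply]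
  have hcol : ∀ r : Fin m,
      ((if (r:ℕ)+1 ≤ l then
          pairQP A (wQ A ii ((r:ℕ)+1) (coroot (ii ((r:ℕ)+1)))) (wP A ii l (omP (ii l)))
        else 0) • eps m ((r:ℕ)+1)) j
      = (if r = j then (if (r:ℕ)+1 ≤ l then
          pairQP A (wQ A ii ((r:ℕ)+1) (coroot (ii ((r:ℕ)+1)))) (wP A ii l (omP (ii l)))
        else 0) else 0) := by
    intro r
    rw [Pi.smul_apply, smul_eq_mul, eps_apply]
    by_cases h : r = j
    · subst h; simp
    · have : ¬ ((j:ℕ)+1 = (r:ℕ)+1) := by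
        intro hh
        exact h (Fin.ext (by omega)).symm
      simp [this, h]
      intro hh; exact absurd (Fin.ext hh).symm h
  rw [Finset.sum_congr rfl (fun r _ => hcol r), Finset.sum_ite_eq' Finset.univ j,
    if_pos (Finset.mem_univ j)]
  congr 1
  by_cases h : (j:ℕ)+1 ≤ l
  · rw [if_pos h, if_pos h, pairQP_cancel hA h]
  · rw [if_neg h, if_neg h]

lemma sum_eps_mul {m : ℕ} (k : ℕ) (hk1 : 1 ≤ k) (hk2 : k ≤ m) (F : Fin m → ℤ) :
    ∑ r : Fin m, eps m k r * F r = F ⟨k-1, by omega⟩ := by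
  rw [Finset.sum_eq_single (⟨k-1, by omega⟩ : Fin m)]
  · simp [eps_apply, show (k-1)+1 = k by omega]
  · intro r _ hr
    rw [eps_apply]
    have : ¬ ((r:ℕ)+1 = k) := by
      intro h
      apply hr
      apply Fin.ext
      simp only []
      omega
    simp [this]
  · intro h; exact absurd (Finset.mem_univ _) h

lemma sum_eps_zero {m : ℕ} (F : Fin m → ℤ) :
    ∑ r : Fin m, eps m 0 r * F r = 0 := by
  apply Finset.sum_eq_zero
  intro r _
  rw [eps_apply]
  simp

/-- Coordinates of `φ'(∂ε_k)`. -/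
lemma U_apply (hA : ∀ i, A i i = 2) {m k : ℕ} (hk1 : 1 ≤ k) (hk2 : k ≤ m) (j : Fin m) :
    phiMap' A ii m (derMap ii m (eps m k)) j
      = -(if (j:ℕ)+1 ≤ k then
            (if (j:ℕ)+1 = k then 1 else g9 A ii k ((j:ℕ)+1)) else 0) := by
  obtain ⟨k', rfl⟩ : ∃ k', k = k' + 1 := ⟨k - 1, by omega⟩
  set k := k' + 1 with hk
  set km := kminus ii k with hkm
  have hkmlt : km < k := kminus_lt ii hk1
  -- step 1 : derMap (eps m k) = derE ii m k
  have hder : derMap ii m (eps m k) = derE ii m k := by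
    funext j'
    rw [derMap, Finset.sum_apply]
    have : ∀ r : Fin m, (eps m k r • derE ii m ((r:ℕ)+1)) j'
        = eps m k r * derE ii m ((r:ℕ)+1) j' := fun r => rfl
    rw [Finset.sum_congr rfl (fun r _ => this r),
      sum_eps_mul k hk1 hk2 (fun r => derE ii m ((r:ℕ)+1) j')]
    simp only [show ((⟨k-1, by omega⟩ : Fin m) : ℕ) + 1 = k by simp only [Fin.val_mk]; omega]
  rw [hder]
  -- step 2 : phiMap' (derE ii m k) j = phiE' k j - phiE' km j
  have hsplit : phiMap' A ii m (derE ii m k) j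
      = phiE' A ii m k j - phiE' A ii m km j := by
    rw [phiMap', Finset.sum_apply]
    have : ∀ r : Fin m, (derE ii m k r • phiE' A ii m ((r:ℕ)+1)) j
        = eps m k r * phiE' A ii m ((r:ℕ)+1) j
          - eps m km r * phiE' A ii m ((r:ℕ)+1) j := by
      intro r
      rw [Pi.smul_apply, smul_eq_mul, derE, Pi.sub_apply, sub_mul]
    rw [Finset.sum_congr rfl (fun r _ => this r), Finset.sum_sub_distrib,
      sum_eps_mul k hk1 hk2 (fun r => phiE' A ii m ((r:ℕ)+1) j)]
    simp only [show ((⟨k-1, by omega⟩ : Fin m) : ℕ) + 1 = k by simp only [Fin.val_mk]; omega]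
    congr 1
    by_cases hkm0 : 1 ≤ km
    · rw [sum_eps_mul km hkm0 (by omega) (fun r => phiE' A ii m ((r:ℕ)+1) j)]
      congr 1
      simp only [Fin.val_mk]
      omega
    · have h0 : km = 0 := by omega
      rw [h0, sum_eps_zero, phiE'_apply hA]
      simp
  rw [hsplit, phiE'_apply hA m k j, phiE'_apply hA m km j]
  set p := (j:ℕ)+1 with hp
  by_cases h1 : p ≤ k
  · rcases Nat.lt_or_ge p k with h2 | h2
    · -- p < k
      by_cases h3 : p ≤ km
      · -- use case (ii)
        have hkm1 : 1 ≤ km := by omega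
        have hcc : ii km = ii k := kminus_ii ii hkm1
        rw [if_pos h1, if_pos h3, if_pos h1, if_neg (show ¬ p = k by omega)]
        have hv : tl9 A ii k (omP (ii k)) p
            = tl9 A ii km (omP (ii km)) p + tl9 A ii k (alP (ii k)) p := by
          rw [omtel hA k' (by omega)]
          congr 1
          rw [tl9_om_stable hA (ii k) (k' - km) k' km (by omega) (by omega)
            (fun r hr1 hr2 => fun hc => kminus_max ii hr1 (by omega) hc) p h3]
          rw [hcc]
        rw [hv]
        have hadd : pairQP A (coroot (ii p))
            (tl9 A ii km (omP (ii km)) p + tl9 A ii k (alP (ii k)) p)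
            = pairQP A (coroot (ii p)) (tl9 A ii km (omP (ii km)) p)
              + pairQP A (coroot (ii p)) (tl9 A ii k (alP (ii k)) p) := by
          rw [pairQP_coroot, pairQP_coroot, pairQP_coroot]
          simp only [Prod.fst_add, Prod.snd_add, Pi.add_apply, mul_add,
            Finset.sum_add_distrib]
          ring
        rw [hadd]
        rw [show pairQP A (coroot (ii p)) (tl9 A ii k (alP (ii k)) p)
            = g9 A ii k p from rfl]
        ring
      · -- km < p < k : use case (i)
        rw [if_pos h1, if_neg h3, if_pos h1, if_neg (show ¬ p = k by omega)]
        have hv : tl9 A ii k (omP (ii k)) p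
            = omP (ii k) + tl9 A ii k (alP (ii k)) p := by
          rw [omtel hA k' (by omega)]
          congr 1
          rw [tl9_om_stable hA (ii k) (k' - p) k' p (by omega) (by omega)
            (fun r hr1 hr2 => fun hc => kminus_max ii (by omega) (by omega) hc) p le_rfl]
          rw [tl9_of_ge le_rfl]
        rw [hv]
        have hadd : pairQP A (coroot (ii p))
            (omP (ii k) + tl9 A ii k (alP (ii k)) p)
            = pairQP A (coroot (ii p)) (omP (ii k))
              + pairQP A (coroot (ii p)) (tl9 A ii k (alP (ii k)) p) := by
          rw [pairQP_coroot, pairQP_coroot, pairQP_coroot]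
          simp only [Prod.fst_add, Prod.snd_add, Pi.add_apply, mul_add,
            Finset.sum_add_distrib]
          ring
        rw [hadd]
        have hom : pairQP A (coroot (ii p)) (omP (ii k)) = 0 := by
          rw [pairQP_coroot]
          have hne : ii p ≠ ii k := fun hc => kminus_max ii (by omega) (by omega) hc
          simp [omP, hne]
        rw [hom,
          show pairQP A (coroot (ii p)) (tl9 A ii k (alP (ii k)) p)
            = g9 A ii k p from rfl]
        ring
    · -- p = k
      have hpk : p = k := by omega
      rw [if_pos h1, if_neg (show ¬ p ≤ km by omega), if_pos h1, if_pos hpk]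
      rw [hpk, tl9_of_ge le_rfl, pairQP_coroot]
      simp [omP]
  · rw [if_neg h1, if_neg (show ¬ p ≤ km by omega), if_neg h1]
    simp


variable {d : Fin n → ℤ}

lemma pairAl_eval (A : Fin n → Fin n → ℤ) (d : Fin n → ℤ) (mu lam : PLat n) :
    pairAl A d mu lam
      = ∑ j, mu.1 j * (d j * ((∑ b, A j b * lam.1 b) + lam.2 j)) := by
  simp [pairAl, pairQP_coroot]

lemma pairAl_sP (hA : ∀ i, A i i = 2) (hsym : ∀ i j, d i * A i j = d j * A j i)
    (a : Fin n) (mu lam : PLat n) (hmu : mu.2 = 0) :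
    pairAl A d (sP A a mu) (sP A a lam) = pairAl A d mu lam := by
  rw [pairAl_eval, pairAl_eval]
  have hQ : ∀ j, (∑ b, A j b * (sP A a lam).1 b) + (sP A a lam).2 j
      = ((∑ b, A j b * lam.1 b) + lam.2 j)
        - A j a * ((∑ b, A a b * lam.1 b) + lam.2 a) := by
    intro j
    rw [sP_snd]
    simp only [sP_fst, mul_sub, Finset.sum_sub_distrib, mul_ite, mul_zero,
      Finset.sum_ite_eq', Finset.mem_univ, if_true]
    ring
  have hmu0 : ∀ j, (sP A a mu).1 j
      = mu.1 j - (if j = a then (∑ k, A a k * mu.1 k) else 0) := by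
    intro j; rw [sP_fst, hmu]; simp
  have h1 : ∑ j, mu.1 j * (d j * A j a) = d a * ∑ k, A a k * mu.1 k := by
    rw [Finset.mul_sum]
    apply Finset.sum_congr rfl; intro j _
    rw [show mu.1 j * (d j * A j a) = (d j * A j a) * mu.1 j by ring, hsym j a]
    ring
  calc ∑ j, (sP A a mu).1 j *
        (d j * ((∑ b, A j b * (sP A a lam).1 b) + (sP A a lam).2 j))
      = ∑ j, ((mu.1 j * (d j * ((∑ b, A j b * lam.1 b) + lam.2 j))
          - (mu.1 j * (d j * A j a)) * ((∑ b, A a b * lam.1 b) + lam.2 a))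
          - (if j = a then
              (∑ k, A a k * mu.1 k) *
                (d j * (((∑ b, A j b * lam.1 b) + lam.2 j)
                  - A j a * ((∑ b, A a b * lam.1 b) + lam.2 a)))
            else 0)) := by
        apply Finset.sum_congr rfl; intro j _
        rw [hQ j, hmu0 j]
        by_cases hj : j = a <;> simp [hj] <;> ring
    _ = ∑ j, mu.1 j * (d j * ((∑ b, A j b * lam.1 b) + lam.2 j)) := by
        simp only [Finset.sum_sub_distrib, Finset.sum_ite_eq', Finset.mem_univ,
          if_true, hA]
        rw [← Finset.sum_mul, h1]
        ring

lemma wP_snd (l : ℕ) (lam : PLat n) : (wP A ii l lam).2 = lam.2 := by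
  induction l generalizing lam with
  | zero => rfl
  | succ l ih =>
    rw [show wP A ii (l+1) lam = wP A ii l (sP A (ii (l+1)) lam) from rfl, ih, sP_snd]

lemma pairAl_wP (hA : ∀ i, A i i = 2) (hsym : ∀ i j, d i * A i j = d j * A j i)
    (p : ℕ) : ∀ (mu lam : PLat n), mu.2 = 0 →
    pairAl A d (wP A ii p mu) (wP A ii p lam) = pairAl A d mu lam := by
  induction p with
  | zero => intro mu lam _; rfl
  | succ p ih =>
    intro mu lam hmu
    rw [show wP A ii (p+1) mu = wP A ii p (sP A (ii (p+1)) mu) from rfl,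
      show wP A ii (p+1) lam = wP A ii p (sP A (ii (p+1)) lam) from rfl,
      ih _ _ (by rw [sP_snd, hmu]), pairAl_sP hA hsym _ _ _ hmu]

lemma pairAl_alP (A : Fin n → Fin n → ℤ) (d : Fin n → ℤ) (i : Fin n) (lam : PLat n) :
    pairAl A d (alP i) lam = d i * pairQP A (coroot i) lam := by
  rw [pairAl]
  rw [show (alP i).1 = fun k => if k = i then 1 else 0 from rfl]
  simp [ite_mul]

/-- The right-hand side in terms of `g9`. -/
lemma rhs_eq (hA : ∀ i, A i i = 2) (hsym : ∀ i j, d i * A i j = d j * A j i)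
    {k l : ℕ} (hkl : k ≤ l) :
    pairAl A d (wP A ii k (alP (ii k))) (wP A ii l (alP (ii l)))
      = d (ii k) * g9 A ii l k := by
  rw [← wP_tl hA l (alP (ii l)) (l-k) k le_rfl hkl,
    pairAl_wP hA hsym k _ _ rfl, pairAl_alP]
  rfl

lemma pairAl_comm (hsym : ∀ i j, d i * A i j = d j * A j i)
    (mu lam : PLat n) (hmu : mu.2 = 0) (hlam : lam.2 = 0) :
    pairAl A d mu lam = pairAl A d lam mu := by
  rw [pairAl_eval, pairAl_eval, hmu, hlam]
  simp only [Pi.zero_apply, add_zero]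
  calc ∑ j, mu.1 j * (d j * ∑ b, A j b * lam.1 b)
      = ∑ j, ∑ b, lam.1 b * ((d j * A j b) * mu.1 j) := by
        apply Finset.sum_congr rfl; intro j _
        rw [Finset.mul_sum, Finset.mul_sum]
        apply Finset.sum_congr rfl; intro b _; ring
    _ = ∑ b, ∑ j, lam.1 b * ((d b * A b j) * mu.1 j) := by
        rw [Finset.sum_comm]
        apply Finset.sum_congr rfl; intro b _
        apply Finset.sum_congr rfl; intro j _
        rw [hsym b j]
    _ = ∑ j, lam.1 j * (d j * ∑ b, A j b * mu.1 b) := by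
        apply Finset.sum_congr rfl; intro b _
        rw [Finset.mul_sum, Finset.mul_sum]
        apply Finset.sum_congr rfl; intro j _; ring

lemma LamF_skew (hsym : ∀ i j, d i * A i j = d j * A j i) {m : ℕ}
    (a b : Fin m → ℤ) : LamF A d ii m a b = - LamF A d ii m b a := by
  rw [LamF, LamF]
  have key : ∀ r s : Fin m,
      a r * b s * ((((r:ℕ):ℤ) - ((s:ℕ):ℤ)).sign *
        (d (ii ((r:ℕ)+1)) * A (ii ((r:ℕ)+1)) (ii ((s:ℕ)+1))))
      = -(b s * a r * ((((s:ℕ):ℤ) - ((r:ℕ):ℤ)).sign *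
        (d (ii ((s:ℕ)+1)) * A (ii ((s:ℕ)+1)) (ii ((r:ℕ)+1))))) := by
    intro r s
    rw [show (((s:ℕ):ℤ) - ((r:ℕ):ℤ)) = -((((r:ℕ):ℤ) - ((s:ℕ):ℤ))) by ring,
      Int.sign_neg, hsym (ii ((s:ℕ)+1)) (ii ((r:ℕ)+1))]
    ring
  calc ∑ r : Fin m, ∑ s : Fin m,
        a r * b s * ((((r:ℕ):ℤ) - ((s:ℕ):ℤ)).sign *
          (d (ii ((r:ℕ)+1)) * A (ii ((r:ℕ)+1)) (ii ((s:ℕ)+1))))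
      = ∑ r : Fin m, ∑ s : Fin m,
          -(b s * a r * ((((s:ℕ):ℤ) - ((r:ℕ):ℤ)).sign *
            (d (ii ((s:ℕ)+1)) * A (ii ((s:ℕ)+1)) (ii ((r:ℕ)+1))))) := by
        apply Finset.sum_congr rfl; intro r _
        exact Finset.sum_congr rfl (fun s _ => key r s)
    _ = -∑ r : Fin m, ∑ s : Fin m,
          b s * a r * ((((s:ℕ):ℤ) - ((r:ℕ):ℤ)).sign *
            (d (ii ((s:ℕ)+1)) * A (ii ((s:ℕ)+1)) (ii ((r:ℕ)+1)))) := by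
        simp [Finset.sum_neg_distrib]
    _ = -∑ s : Fin m, ∑ r : Fin m,
          b s * a r * ((((s:ℕ):ℤ) - ((r:ℕ):ℤ)).sign *
            (d (ii ((s:ℕ)+1)) * A (ii ((s:ℕ)+1)) (ii ((r:ℕ)+1)))) := by
        rw [Finset.sum_comm]

lemma fin_sum_shift {m : ℕ} (k : ℕ) (hk : k ≤ m) (F : ℕ → ℤ) :
    ∑ j : Fin m, (if (j:ℕ)+1 ≤ k then F ((j:ℕ)+1) else 0)
      = ∑ p ∈ Finset.Icc 1 k, F p := by
  rw [Fin.sum_univ_eq_sum_range (fun j => if j+1 ≤ k then F (j+1) else 0)]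
  have h1 : ∑ j ∈ Finset.range m, (if j+1 ≤ k then F (j+1) else 0)
      = ∑ j ∈ Finset.range k, (if j+1 ≤ k then F (j+1) else 0) :=
    (Finset.sum_subset (Finset.range_subset_range.2 hk) (fun x hx hnx => by
      rw [if_neg]
      simp only [Finset.mem_range] at hx hnx
      omega)).symm
  rw [h1, Finset.sum_congr rfl (fun x hx => by
    rw [if_pos]
    simp only [Finset.mem_range] at hx
    omega)]
  have h2 : Finset.Icc 1 k
      = (Finset.range k).map ⟨(· + 1), add_left_injective 1⟩ := by
    ext p
    simp only [Finset.mem_Icc, Finset.mem_map, Finset.mem_range,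
      Function.Embedding.coeFn_mk]
    constructor
    · intro h; exact ⟨p - 1, by omega, by omega⟩
    · intro ⟨a, ha, hap⟩; omega
  rw [h2, Finset.sum_map]
  rfl


lemma g9_diag (hA : ∀ i, A i i = 2) (k : ℕ) : g9 A ii k k = 2 := by
  rw [g9, tl9_of_ge le_rfl, pairQP_coroot]
  rw [show (alP (ii k)).2 (ii k) = 0 from rfl, add_zero]
  rw [show (alP (ii k)).1 = fun j => if j = ii k then 1 else 0 from rfl]
  simp [mul_ite, hA]

/-- `R2'`: key recursion with the modified diagonal. -/
lemma g9_rec' (hA : ∀ i, A i i = 2) {p k : ℕ} (hp : p < k) :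
    ∑ r ∈ Finset.Ioc p k, (if r = k then 1 else g9 A ii k r) * A (ii p) (ii r)
      = - g9 A ii k p := by
  have hgt : ∀ r, (if r = k then 1 else g9 A ii k r)
      = g9 A ii k r - (if r = k then 1 else 0) := by
    intro r
    by_cases hr : r = k
    · rw [if_pos hr, if_pos hr, hr, g9_diag hA]; ring
    · rw [if_neg hr, if_neg hr]; ring
  calc ∑ r ∈ Finset.Ioc p k, (if r = k then 1 else g9 A ii k r) * A (ii p) (ii r)
      = ∑ r ∈ Finset.Ioc p k, (g9 A ii k r * A (ii p) (ii r)
          - (if r = k then A (ii p) (ii r) else 0)) := by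
        apply Finset.sum_congr rfl; intro r _
        rw [hgt r]
        by_cases hr : r = k <;> simp [hr] <;> ring
    _ = (∑ r ∈ Finset.Ioc p k, g9 A ii k r * A (ii p) (ii r)) - A (ii p) (ii k) := by
        rw [Finset.sum_sub_distrib]
        congr 1
        rw [Finset.sum_ite_eq' (Finset.Ioc p k) k (fun r => A (ii p) (ii r)),
          if_pos (Finset.mem_Ioc.2 ⟨hp, le_rfl⟩)]
    _ = - g9 A ii k p := by
        have := g9_rec A ii k p
        omega

/-- Step A : the inner sum. -/
lemma stepA (hA : ∀ i, A i i = 2) (hsym : ∀ i j, d i * A i j = d j * A j i)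
    {p l : ℕ} (hp1 : 1 ≤ p) (hpl : p < l) :
    ∑ q ∈ Finset.Icc 1 l, (if q = l then 1 else g9 A ii l q) *
        ((((p:ℕ):ℤ) - ((q:ℕ):ℤ)).sign * (d (ii p) * A (ii p) (ii q)))
      = (∑ q ∈ Finset.Ico 1 p, g9 A ii l q * (d (ii q) * A (ii q) (ii p)))
        + d (ii p) * g9 A ii l p := by
  have hsplit : Finset.Icc 1 l = Finset.Ico 1 p ∪ Finset.Icc p l := by
    ext x
    simp only [Finset.mem_Icc, Finset.mem_union, Finset.mem_Ico]
    omega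
  have hdisj : Disjoint (Finset.Ico 1 p) (Finset.Icc p l) := by
    rw [Finset.disjoint_left]
    intro x hx hx'
    simp only [Finset.mem_Ico, Finset.mem_Icc] at hx hx'
    omega
  rw [hsplit, Finset.sum_union hdisj]
  have hins : Finset.Icc p l = insert p (Finset.Ioc p l) := by
    ext r; simp only [Finset.mem_Icc, Finset.mem_insert, Finset.mem_Ioc]; omega
  rw [hins, Finset.sum_insert (by simp)]
  have hdiag : (if p = l then (1:ℤ) else g9 A ii l p) *
      ((((p:ℕ):ℤ) - ((p:ℕ):ℤ)).sign * (d (ii p) * A (ii p) (ii p))) = 0 := by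
    simp
  rw [hdiag]
  have hS1 : ∑ q ∈ Finset.Ico 1 p, (if q = l then 1 else g9 A ii l q) *
      ((((p:ℕ):ℤ) - ((q:ℕ):ℤ)).sign * (d (ii p) * A (ii p) (ii q)))
      = ∑ q ∈ Finset.Ico 1 p, g9 A ii l q * (d (ii q) * A (ii q) (ii p)) := by
    apply Finset.sum_congr rfl; intro q hq
    simp only [Finset.mem_Ico] at hq
    rw [if_neg (by omega), Int.sign_eq_one_of_pos (by omega), hsym (ii p) (ii q)]
    ring
  have hS2 : ∑ q ∈ Finset.Ioc p l, (if q = l then 1 else g9 A ii l q) *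
      ((((p:ℕ):ℤ) - ((q:ℕ):ℤ)).sign * (d (ii p) * A (ii p) (ii q)))
      = d (ii p) * g9 A ii l p := by
    calc ∑ q ∈ Finset.Ioc p l, (if q = l then 1 else g9 A ii l q) *
        ((((p:ℕ):ℤ) - ((q:ℕ):ℤ)).sign * (d (ii p) * A (ii p) (ii q)))
        = ∑ q ∈ Finset.Ioc p l, (-(d (ii p))) *
            ((if q = l then 1 else g9 A ii l q) * A (ii p) (ii q)) := by
          apply Finset.sum_congr rfl; intro q hq
          simp only [Finset.mem_Ioc] at hq
          rw [Int.sign_eq_neg_one_of_neg (by omega)]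
          ring
      _ = (-(d (ii p))) * ∑ q ∈ Finset.Ioc p l,
            (if q = l then 1 else g9 A ii l q) * A (ii p) (ii q) := by
          rw [Finset.mul_sum]
      _ = d (ii p) * g9 A ii l p := by
          rw [g9_rec' hA hpl]
          ring
  rw [hS1, hS2]
  ring

/-- The main combinatorial identity. -/
lemma comb (hA : ∀ i, A i i = 2) (hsym : ∀ i j, d i * A i j = d j * A j i)
    {k l : ℕ} (hk1 : 1 ≤ k) (hkl : k < l) :
    ∑ p ∈ Finset.Icc 1 k, ∑ q ∈ Finset.Icc 1 l,
        (if p = k then 1 else g9 A ii k p) * ((if q = l then 1 else g9 A ii l q) *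
          ((((p:ℕ):ℤ) - ((q:ℕ):ℤ)).sign * (d (ii p) * A (ii p) (ii q))))
      = d (ii k) * g9 A ii l k := by
  have hinner : ∀ p ∈ Finset.Icc 1 k,
      ∑ q ∈ Finset.Icc 1 l, (if p = k then 1 else g9 A ii k p) *
        ((if q = l then 1 else g9 A ii l q) *
          ((((p:ℕ):ℤ) - ((q:ℕ):ℤ)).sign * (d (ii p) * A (ii p) (ii q))))
      = (if p = k then 1 else g9 A ii k p) *
          ((∑ q ∈ Finset.Ico 1 p, g9 A ii l q * (d (ii q) * A (ii q) (ii p)))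
            + d (ii p) * g9 A ii l p) := by
    intro p hp
    simp only [Finset.mem_Icc] at hp
    rw [← stepA (A := A) (ii := ii) (d := d) hA hsym hp.1 (by omega : p < l),
      Finset.mul_sum]
  rw [Finset.sum_congr rfl hinner]
  have hexp : ∑ p ∈ Finset.Icc 1 k, (if p = k then 1 else g9 A ii k p) *
      ((∑ q ∈ Finset.Ico 1 p, g9 A ii l q * (d (ii q) * A (ii q) (ii p)))
        + d (ii p) * g9 A ii l p)
      = (∑ p ∈ Finset.Icc 1 k, ∑ q ∈ Finset.Ico 1 p,
          (if p = k then 1 else g9 A ii k p) *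
            (g9 A ii l q * (d (ii q) * A (ii q) (ii p))))
        + ∑ p ∈ Finset.Icc 1 k, (if p = k then 1 else g9 A ii k p) *
            (d (ii p) * g9 A ii l p) := by
    rw [← Finset.sum_add_distrib]
    apply Finset.sum_congr rfl; intro p _
    rw [mul_add, Finset.mul_sum]
  rw [hexp]
  -- swap the double sum
  have hswap : ∑ p ∈ Finset.Icc 1 k, ∑ q ∈ Finset.Ico 1 p,
      (if p = k then 1 else g9 A ii k p) *
        (g9 A ii l q * (d (ii q) * A (ii q) (ii p)))
      = ∑ q ∈ Finset.Ico 1 k, (g9 A ii l q * d (ii q)) * (- g9 A ii k q) := by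
    have h1 : ∀ p ∈ Finset.Icc 1 k, ∑ q ∈ Finset.Ico 1 p,
        (if p = k then 1 else g9 A ii k p) *
          (g9 A ii l q * (d (ii q) * A (ii q) (ii p)))
        = ∑ q ∈ Finset.Ico 1 k, (if q < p then
            (if p = k then 1 else g9 A ii k p) *
              (g9 A ii l q * (d (ii q) * A (ii q) (ii p))) else 0) := by
      intro p hp
      simp only [Finset.mem_Icc] at hp
      rw [show Finset.Ico 1 p = Finset.filter (fun q => q < p) (Finset.Ico 1 k) by
        ext q; simp only [Finset.mem_Ico, Finset.mem_filter]; omega]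
      rw [Finset.sum_filter]
    rw [Finset.sum_congr rfl h1, Finset.sum_comm]
    apply Finset.sum_congr rfl
    intro q hq
    simp only [Finset.mem_Ico] at hq
    have h2 : ∑ p ∈ Finset.Icc 1 k, (if q < p then
        (if p = k then 1 else g9 A ii k p) *
          (g9 A ii l q * (d (ii q) * A (ii q) (ii p))) else 0)
        = ∑ p ∈ Finset.Ioc q k, (if p = k then 1 else g9 A ii k p) *
            (g9 A ii l q * (d (ii q) * A (ii q) (ii p))) := by
      rw [show Finset.Ioc q k = Finset.filter (fun p => q < p) (Finset.Icc 1 k) by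
        ext p; simp only [Finset.mem_Ioc, Finset.mem_Icc, Finset.mem_filter]; omega]
      rw [Finset.sum_filter]
    rw [h2]
    calc ∑ p ∈ Finset.Ioc q k, (if p = k then 1 else g9 A ii k p) *
          (g9 A ii l q * (d (ii q) * A (ii q) (ii p)))
        = (g9 A ii l q * d (ii q)) * ∑ p ∈ Finset.Ioc q k,
            (if p = k then 1 else g9 A ii k p) * A (ii q) (ii p) := by
          rw [Finset.mul_sum]
          apply Finset.sum_congr rfl; intro p _; ring
      _ = (g9 A ii l q * d (ii q)) * (- g9 A ii k q) := by
          rw [g9_rec' hA hq.2]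
  rw [hswap]
  have hlast : ∑ p ∈ Finset.Icc 1 k, (if p = k then 1 else g9 A ii k p) *
      (d (ii p) * g9 A ii l p)
      = d (ii k) * g9 A ii l k
        + ∑ p ∈ Finset.Ico 1 k, g9 A ii k p * (d (ii p) * g9 A ii l p) := by
    rw [show Finset.Icc 1 k = insert k (Finset.Ico 1 k) by
      ext p; simp only [Finset.mem_Icc, Finset.mem_insert, Finset.mem_Ico]; omega]
    rw [Finset.sum_insert (by simp)]
    rw [if_pos rfl, one_mul]
    congr 1
    apply Finset.sum_congr rfl; intro p hp
    simp only [Finset.mem_Ico] at hp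
    rw [if_neg (by omega)]
  rw [hlast]
  have hz : (∑ q ∈ Finset.Ico 1 k, (g9 A ii l q * d (ii q)) * (- g9 A ii k q))
      + ∑ p ∈ Finset.Ico 1 k, g9 A ii k p * (d (ii p) * g9 A ii l p) = 0 := by
    rw [← Finset.sum_add_distrib]
    exact Finset.sum_eq_zero (fun q _ => by ring)
  linarith

/-- The LHS as a combinatorial double sum, for `k, l ∈ [1, m]`. -/
lemma LamF_eval (hA : ∀ i, A i i = 2) {m k l : ℕ}
    (hk1 : 1 ≤ k) (hk2 : k ≤ m) (hl1 : 1 ≤ l) (hl2 : l ≤ m) :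
    LamF A d ii m (phiMap' A ii m (derMap ii m (eps m k)))
        (phiMap' A ii m (derMap ii m (eps m l)))
      = ∑ p ∈ Finset.Icc 1 k, ∑ q ∈ Finset.Icc 1 l,
          (if p = k then 1 else g9 A ii k p) * ((if q = l then 1 else g9 A ii l q) *
            ((((p:ℕ):ℤ) - ((q:ℕ):ℤ)).sign * (d (ii p) * A (ii p) (ii q)))) := by
  rw [LamF]
  have hterm : ∀ r s : Fin m,
      phiMap' A ii m (derMap ii m (eps m k)) r *
        phiMap' A ii m (derMap ii m (eps m l)) s *
        ((((r:ℕ):ℤ) - ((s:ℕ):ℤ)).sign *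
          (d (ii ((r:ℕ)+1)) * A (ii ((r:ℕ)+1)) (ii ((s:ℕ)+1))))
      = (if (r:ℕ)+1 ≤ k then
          (if (s:ℕ)+1 ≤ l then
            (if (r:ℕ)+1 = k then 1 else g9 A ii k ((r:ℕ)+1)) *
              ((if (s:ℕ)+1 = l then 1 else g9 A ii l ((s:ℕ)+1)) *
                (((((r:ℕ)+1:ℕ):ℤ) - (((s:ℕ)+1:ℕ):ℤ)).sign *
                  (d (ii ((r:ℕ)+1)) * A (ii ((r:ℕ)+1)) (ii ((s:ℕ)+1)))))
          else 0) else 0) := by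
    intro r s
    have hsg : ((((r:ℕ)+1:ℕ):ℤ) - (((s:ℕ)+1:ℕ):ℤ)) = (((r:ℕ):ℤ) - ((s:ℕ):ℤ)) := by
      push_cast; ring
    rw [U_apply hA hk1 hk2 r, U_apply hA hl1 hl2 s, hsg]
    by_cases h1 : (r:ℕ)+1 ≤ k <;> by_cases h2 : (s:ℕ)+1 ≤ l <;>
      simp only [if_pos, if_neg, h1, h2, if_true, if_false, neg_zero, zero_mul,
        mul_zero] <;> ring
  rw [Finset.sum_congr rfl (fun r _ =>
    Finset.sum_congr rfl (fun s _ => hterm r s))]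
  have hout : ∀ r : Fin m,
      ∑ s : Fin m, (if (r:ℕ)+1 ≤ k then
          (if (s:ℕ)+1 ≤ l then
            (if (r:ℕ)+1 = k then 1 else g9 A ii k ((r:ℕ)+1)) *
              ((if (s:ℕ)+1 = l then 1 else g9 A ii l ((s:ℕ)+1)) *
                (((((r:ℕ)+1:ℕ):ℤ) - (((s:ℕ)+1:ℕ):ℤ)).sign *
                  (d (ii ((r:ℕ)+1)) * A (ii ((r:ℕ)+1)) (ii ((s:ℕ)+1)))))
          else 0) else 0)
      = (if (r:ℕ)+1 ≤ k then
          (∑ q ∈ Finset.Icc 1 l,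
            (if (r:ℕ)+1 = k then 1 else g9 A ii k ((r:ℕ)+1)) *
              ((if q = l then 1 else g9 A ii l q) *
                (((((r:ℕ)+1:ℕ):ℤ) - ((q:ℕ):ℤ)).sign *
                  (d (ii ((r:ℕ)+1)) * A (ii ((r:ℕ)+1)) (ii q)))))
          else 0) := by
    intro r
    by_cases h1 : (r:ℕ)+1 ≤ k
    · simp only [if_pos h1]
      exact fin_sum_shift l hl2 (fun q =>
        (if (r:ℕ)+1 = k then 1 else g9 A ii k ((r:ℕ)+1)) *
          ((if q = l then 1 else g9 A ii l q) *
            (((((r:ℕ)+1:ℕ):ℤ) - ((q:ℕ):ℤ)).sign *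
              (d (ii ((r:ℕ)+1)) * A (ii ((r:ℕ)+1)) (ii q)))))
    · simp only [if_neg h1]
      simp
  rw [Finset.sum_congr rfl (fun r _ => hout r)]
  exact fin_sum_shift k hk2 (fun p =>
    ∑ q ∈ Finset.Icc 1 l,
      (if p = k then 1 else g9 A ii k p) *
        ((if q = l then 1 else g9 A ii l q) *
          ((((p:ℕ):ℤ) - ((q:ℕ):ℤ)).sign * (d (ii p) * A (ii p) (ii q)))))

end Aux9



/-- `Λ_𝐢(φ'_𝐢(∂_𝐢 ε_k), φ'_𝐢(∂_𝐢 ε_ℓ)) = sgn(ℓ-k) (w_k α_{i_k}, w_ℓ α_{i_ℓ})`. -/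
theorem Lambda_phi'_der {n m : ℕ} (hm : 1 ≤ m)
    (A : Fin n → Fin n → ℤ) (d : Fin n → ℤ)
    (hA : ∀ i, A i i = 2) (hd : ∀ i, 0 < d i)
    (hsym : ∀ i j, d i * A i j = d j * A j i)
    (ii : ℕ → Fin n)
    (k : ℕ) (hk1 : 1 ≤ k) (hk2 : k ≤ m)
    (l : ℕ) (hl1 : 1 ≤ l) (hl2 : l ≤ m) :
    LamF A d ii m (phiMap' A ii m (derMap ii m (eps m k)))
        (phiMap' A ii m (derMap ii m (eps m l))) =
      ((l : ℤ) - (k : ℤ)).sign *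
        pairAl A d (wP A ii k (alP (ii k))) (wP A ii l (alP (ii l))) := by
  rcases lt_trichotomy k l with h | h | h
  · rw [LamF_eval hA hk1 hk2 hl1 hl2, comb hA hsym hk1 h,
      rhs_eq hA hsym (le_of_lt h),
      show ((l:ℤ) - (k:ℤ)).sign = 1 from Int.sign_eq_one_of_pos (by omega), one_mul]
  · subst h
    have h0 := LamF_skew (A := A) (ii := ii) (d := d) hsym
      (phiMap' A ii m (derMap ii m (eps m k)))
      (phiMap' A ii m (derMap ii m (eps m k)))
    have hz : LamF A d ii m (phiMap' A ii m (derMap ii m (eps m k)))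
        (phiMap' A ii m (derMap ii m (eps m k))) = 0 := by linarith
    rw [hz, sub_self, Int.sign_zero, zero_mul]
  · rw [LamF_skew (A := A) (ii := ii) (d := d) hsym,
      LamF_eval hA hl1 hl2 hk1 hk2, comb hA hsym hl1 h,
      show ((l:ℤ) - (k:ℤ)).sign = -1 from Int.sign_eq_neg_one_of_neg (by omega),
      pairAl_comm hsym _ _ (by rw [wP_snd]; rfl) (by rw [wP_snd]; rfl),
      rhs_eq hA hsym (le_of_lt h)]
    ring
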